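/- Let C be the active subspace matrix of f, with eigendecomposition C = WΛWᵀ and eigenvector w_i corresponding to eigenvalue λ_i. If λ_i = 0, then (∇f(x))ᵀ w_i = 0 for ρ-almost every x; i.e., f has vanishing directional derivative along w_i almost everywhere with respect to ρ. -/

import Mathlib

open MeasureTheory

/-- If a unit eigenvector `w` of the active subspace matrix `C` has eigenvalue
`λ = 0`, then the directional derivative of `f` along `w` vanishes for
`ρ`-almost every `x` in the cube. -/
theorem active_subspace_zero_eigenvalue
    (m : ℕ) (f : (Fin m → ℝ) → ℝ) (ρ : (Fin m → ℝ) → ℝ)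
    (hf : ContDiff ℝ 1 f) (hρ : ∀ x, 0 ≤ ρ x)
    (hρ1 : ∫ x in Set.Icc (fun _ : Fin m => (-1 : ℝ)) (fun _ : Fin m => (1 : ℝ)), ρ x = 1)
    (hint : ∀ i j : Fin m, IntegrableOn
      (fun x => fderiv ℝ f x (Pi.single i 1) * fderiv ℝ f x (Pi.single j 1) * ρ x)
      (Set.Icc (fun _ : Fin m => (-1 : ℝ)) (fun _ : Fin m => (1 : ℝ))))
    (C : Matrix (Fin m) (Fin m) ℝ)
    (hC : ∀ i j : Fin m, C i j =
      ∫ x in Set.Icc (fun _ : Fin m => (-1 : ℝ)) (fun _ : Fin m => (1 : ℝ)),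
        fderiv ℝ f x (Pi.single i 1) * fderiv ℝ f x (Pi.single j 1) * ρ x)
    (w : Fin m → ℝ) (lam : ℝ)
    (hunit : ∑ i, w i ^ 2 = 1)
    (heig : C.mulVec w = lam • w) (hlam : lam = 0) :
    ∀ᵐ x ∂((volume.restrict
        (Set.Icc (fun _ : Fin m => (-1 : ℝ)) (fun _ : Fin m => (1 : ℝ)))).withDensity
        (fun x => ENNReal.ofReal (ρ x))),
      ∑ i, fderiv ℝ f x (Pi.single i 1) * w i = 0 := by
  set cube := Set.Icc (fun _ : Fin m => (-1 : ℝ)) (fun _ : Fin m => (1 : ℝ)) with hcube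
  set μ := volume.restrict cube with hμ
  set g : (Fin m → ℝ) → ℝ := fun x => ∑ i, fderiv ℝ f x (Pi.single i 1) * w i with hg
  set h : (Fin m → ℝ) → ℝ := fun x => g x ^ 2 * ρ x with hh
  -- g is continuous
  have hgc : Continuous g := by
    apply continuous_finset_sum
    intro i _
    exact ((hf.continuous_fderiv one_ne_zero).clm_apply continuous_const).mul continuous_const
  -- expansion of h as a double sum
  have hexp : ∀ x, h x = ∑ i, ∑ j, (w i * w j) *
      (fderiv ℝ f x (Pi.single i 1) * fderiv ℝ f x (Pi.single j 1) * ρ x) := by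
    intro x
    simp only [hh, hg, sq, Finset.sum_mul, Finset.mul_sum]
    refine Finset.sum_congr rfl fun i _ => Finset.sum_congr rfl fun j _ => ?_
    ring
  -- integrability of h on the cube
  have hint' : ∀ i j : Fin m, IntegrableOn
      (fun x => (w i * w j) *
        (fderiv ℝ f x (Pi.single i 1) * fderiv ℝ f x (Pi.single j 1) * ρ x)) cube := by
    intro i j
    exact (hint i j).const_mul _
  have hhint : Integrable h μ := by
    have : Integrable (fun x => ∑ i, ∑ j, (w i * w j) *
        (fderiv ℝ f x (Pi.single i 1) * fderiv ℝ f x (Pi.single j 1) * ρ x)) μ := by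
      apply integrable_finset_sum
      intro i _
      apply integrable_finset_sum
      intro j _
      exact hint' i j
    exact this.congr (Filter.Eventually.of_forall fun x => (hexp x).symm)
  -- the integral of h is zero
  have hmv : C.mulVec w = 0 := by rw [heig, hlam, zero_smul]
  have hint0 : ∫ x, h x ∂μ = 0 := by
    have h1 : ∫ x, h x ∂μ = ∑ i, ∑ j, (w i * w j) * C i j := by
      rw [integral_congr_ae (Filter.Eventually.of_forall hexp)]
      rw [integral_finset_sum _ (fun i _ => integrable_finset_sum _ (fun j _ => hint' i j))]
      refine Finset.sum_congr rfl fun i _ => ?_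
      rw [integral_finset_sum _ (fun j _ => hint' i j)]
      refine Finset.sum_congr rfl fun j _ => ?_
      rw [integral_const_mul, hC i j]
    rw [h1]
    have : ∀ i, ∑ j, (w i * w j) * C i j = w i * (C.mulVec w i) := by
      intro i
      simp only [Matrix.mulVec, dotProduct, Finset.mul_sum]
      refine Finset.sum_congr rfl fun j _ => ?_
      ring
    simp [this, hmv]
  -- nonneg + zero integral gives h = 0 a.e.
  have hae : ∀ᵐ x ∂μ, h x = 0 := by
    have := (integral_eq_zero_iff_of_nonneg
      (fun x => mul_nonneg (sq_nonneg _) (hρ x)) hhint).mp hint0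
    filter_upwards [this] with x hx using hx
  -- conclude
  rw [ae_iff]
  have hs : MeasurableSet {x | ¬ g x = 0} := by
    have : {x | ¬ g x = 0} = g ⁻¹' {(0 : ℝ)}ᶜ := by ext x; simp
    rw [this]
    exact (isOpen_compl_singleton.preimage hgc).measurableSet
  rw [withDensity_apply _ hs]
  have hz : ∀ᵐ x ∂μ.restrict {x | ¬ g x = 0}, ENNReal.ofReal (ρ x) = 0 := by
    rw [ae_restrict_iff' hs]
    filter_upwards [hae] with x hx hxs
    have hx' : g x ^ 2 * ρ x = 0 := hx
    rcases mul_eq_zero.mp hx' with h1 | h1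
    · exact absurd (pow_eq_zero_iff two_ne_zero |>.mp h1) hxs
    · simp [h1]
  calc ∫⁻ x in {x | ¬ g x = 0}, ENNReal.ofReal (ρ x) ∂μ
      = ∫⁻ _ in {x | ¬ g x = 0}, 0 ∂μ := lintegral_congr_ae hz
    _ = 0 := by simp
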